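/- There exist a precompact Hausdorff abelian topological group G and a subset A of nonzero elements of G such that the Kalton map κ_A : S_A → ⟨A⟩ is a group isomorphism onto ⟨A⟩ and an open map onto ⟨A⟩ (with the subspace topology), but A is not topologically independent. -/

import Mathlib

open scoped DirectSum

/-- A subset `A` of a topological abelian group is *topologically independent*. -/
def TopIndep {G : Type*} [AddCommGroup G] [TopologicalSpace G] (A : Set G) : Prop :=
  (0 : G) ∉ A ∧ ∀ W ∈ nhds (0 : G), ∃ U ∈ nhds (0 : G),
    ∀ B : Finset G, ↑B ⊆ A → ∀ z : G → ℤ,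
      (∑ a ∈ B, z a • a) ∈ U → ∀ a ∈ B, z a • a ∈ W

/-- The Kalton map `κ_A : S_A = ⨁_{a ∈ A} ⟨a⟩ → G`. -/
noncomputable def kalton {G : Type*} [AddCommGroup G] (A : Set G) :
    (⨁ a : A, AddSubgroup.zmultiples a.1) →+ G :=
  letI := Classical.decEq A
  DirectSum.toAddMonoid fun a => (AddSubgroup.zmultiples a.1).subtype

/-- The topology on `S_A = ⨁_{a ∈ A} ⟨a⟩` inherited from the Tychonoff product
`∏_{a ∈ A} ⟨a⟩`. -/
def sumTop {G : Type*} [AddCommGroup G] [TopologicalSpace G] (A : Set G) :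
    TopologicalSpace (⨁ a : A, AddSubgroup.zmultiples a.1) :=
  TopologicalSpace.induced (fun x a => x a) Pi.topologicalSpace


open Uniformity

section Setup
def U4 : UniformSpace (ZMod 4) := ⊥
attribute [local instance] U4
theorem discr4 : DiscreteTopology (ZMod 4) := discreteTopology_bot _
attribute [local instance] discr4

theorem uag4 : IsUniformAddGroup (ZMod 4) := by
  constructor
  show Filter.Tendsto _ _ (Filter.principal SetRel.id)
  rw [Filter.tendsto_principal]
  have h1 : {x : (ZMod 4 × ZMod 4) × (ZMod 4 × ZMod 4) | (x.1.1, x.2.1) ∈ SetRel.id} ∈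
      𝓤 (ZMod 4 × ZMod 4) :=
    uniformContinuous_fst (show SetRel.id ∈ Filter.principal SetRel.id from Filter.mem_principal_self _)
  have h2 : {x : (ZMod 4 × ZMod 4) × (ZMod 4 × ZMod 4) | (x.1.2, x.2.2) ∈ SetRel.id} ∈
      𝓤 (ZMod 4 × ZMod 4) :=
    uniformContinuous_snd (show SetRel.id ∈ Filter.principal SetRel.id from Filter.mem_principal_self _)
  filter_upwards [h1, h2] with x hx1 hx2
  simp only [SetRel.id, Set.mem_setOf_eq] at hx1 hx2 ⊢
  rw [hx1, hx2]

attribute [local instance] uag4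

def aa (n : ℕ) : ℕ → ZMod 4 := fun m => if m = 0 ∨ m = n + 1 then 1 else 0

theorem aa_inj : Function.Injective aa := by
  intro n m h
  by_contra hnm
  have := congrFun h (n+1)
  simp [aa, hnm] at this
  exact absurd this (by decide)

theorem aa_ne_zero (n : ℕ) : aa n ≠ 0 := by
  intro h
  have := congrFun h 0
  simp [aa] at this
  exact absurd this (by decide)

theorem zsmul_aa (z : ℤ) (n m : ℕ) :
    (z • aa n) m = if m = 0 ∨ m = n + 1 then (z : ZMod 4) else 0 := by
  simp only [Pi.smul_apply, aa]
  split <;> simp [zsmul_eq_mul]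

theorem recon {n : ℕ} {y : ℕ → ZMod 4} (hy : y ∈ AddSubgroup.zmultiples (aa n)) :
    y = (ZMod.val (y (n+1))) • aa n := by
  obtain ⟨z, hz⟩ := hy
  have hz' : z • aa n = y := hz
  subst hz'
  have h1 : (z • aa n) (n+1) = (z : ZMod 4) := by rw [zsmul_aa]; simp
  rw [h1]
  funext m
  rw [zsmul_aa]
  simp only [Pi.smul_apply, aa, nsmul_eq_mul]
  split <;> simp [ZMod.natCast_val, ZMod.cast_id]

theorem coord_zero {n m : ℕ} (hnm : m ≠ n) {y : ℕ → ZMod 4}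
    (hy : y ∈ AddSubgroup.zmultiples (aa m)) : y (n+1) = 0 := by
  obtain ⟨z, hz⟩ := hy
  have hz' : z • aa m = y := hz
  subst hz'
  rw [zsmul_aa]
  simp [Nat.succ_ne_zero, Ne.symm hnm]

/-- The set A -/
def AS : Set (ℕ → ZMod 4) := Set.range aa

attribute [local instance 0] Classical.decEq

set_option maxHeartbeats 1000000 in
theorem kalton_of (i : ↥AS) (y : AddSubgroup.zmultiples i.1) :
    kalton AS (DirectSum.of (fun a : ↥AS => ↥(AddSubgroup.zmultiples a.1)) i y) = y := by
  unfold kalton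
  exact DirectSum.toAddMonoid_of (fun a : ↥AS => (AddSubgroup.zmultiples a.1).subtype) i y

theorem kalton_coord (n : ℕ) (b : ↥AS) (hb : b.1 = aa n)
    (x : ⨁ a : AS, AddSubgroup.zmultiples a.1) :
    (kalton AS x) (n+1) = (x b : ℕ → ZMod 4) (n+1) := by
  induction x using DirectSum.induction_on with
  | zero => simp
  | of i y =>
    rw [kalton_of]
    rcases eq_or_ne i b with rfl | hib
    · rw [DirectSum.of_eq_same]
    · rw [DirectSum.of_eq_of_ne _ _ _ hib.symm]
      obtain ⟨m, hm⟩ := i.2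
      have hmn : m ≠ n := by
        rintro rfl
        exact hib (Subtype.ext (hm.symm.trans hb.symm))
      have : (y : ℕ → ZMod 4) (n+1) = 0 := coord_zero hmn (by rw [hm]; exact y.2)
      simp [this]
  | add u v hu hv =>
    simp only [map_add, DirectSum.add_apply, Pi.add_apply, AddSubgroup.coe_add, hu, hv]

theorem kalton_inj : Function.Injective (kalton AS) := by
  rw [injective_iff_map_eq_zero]
  intro x hx
  apply DFinsupp.ext (fun b => ?_)
  apply Subtype.ext
  obtain ⟨n, hn⟩ := b.2
  have h2 : (x b : ℕ → ZMod 4) = (ZMod.val ((x b : ℕ → ZMod 4) (n+1))) • aa n :=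
    recon (by rw [hn]; exact (x b).2)
  have h3 : (x b : ℕ → ZMod 4) (n+1) = 0 := by
    rw [← kalton_coord n b hn.symm x, hx]
    simp
  show (x b : ℕ → ZMod 4) = ((0 : AddSubgroup.zmultiples b.1) : ℕ → ZMod 4)
  rw [h2, h3]
  simp

theorem kalton_range : Set.range (kalton AS) = (AddSubgroup.closure AS : Set (ℕ → ZMod 4)) := by
  apply subset_antisymm
  · rintro _ ⟨x, rfl⟩
    induction x using DirectSum.induction_on with
    | zero => simpa using (AddSubgroup.closure AS).zero_mem
    | of i y =>
      rw [kalton_of]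
      obtain ⟨z, hz⟩ := y.2
      have hz' : z • (i : ℕ → ZMod 4) = y := hz
      rw [← hz']
      exact AddSubgroup.zsmul_mem _ (AddSubgroup.subset_closure i.2) z
    | add u v hu hv =>
      rw [map_add]
      exact AddSubgroup.add_mem _ hu hv
  · intro g hg
    have : AddSubgroup.closure AS ≤ (kalton AS).range := by
      rw [AddSubgroup.closure_le]
      intro c hc
      exact ⟨DirectSum.of (fun a : ↥AS => ↥(AddSubgroup.zmultiples a.1)) ⟨c, hc⟩
        ⟨c, AddSubgroup.mem_zmultiples c⟩, kalton_of _ _⟩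
    exact this hg


noncomputable def idx (b : ↥AS) : ℕ := Classical.choose b.2

theorem idx_spec (b : ↥AS) : aa (idx b) = b.1 := Classical.choose_spec b.2

noncomputable def PP : (ℕ → ZMod 4) → (∀ b : ↥AS, AddSubgroup.zmultiples b.1) := fun g b =>
  ⟨(ZMod.val (g (idx b + 1))) • b.1,
    AddSubgroup.nsmul_mem _ (AddSubgroup.mem_zmultiples _) _⟩

theorem PP_cont : Continuous PP := by
  apply continuous_pi
  intro b
  apply Continuous.subtype_mk
  exact (continuous_of_discreteTopology
    (f := fun v : ZMod 4 => (ZMod.val v) • (b : ℕ → ZMod 4))).comp (continuous_apply (idx b + 1))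

theorem PP_kalton (x : ⨁ a : AS, AddSubgroup.zmultiples a.1) :
    PP (kalton AS x) = fun b => x b := by
  funext b
  apply Subtype.ext
  show (ZMod.val ((kalton AS x) (idx b + 1))) • (b : ℕ → ZMod 4) = (x b : ℕ → ZMod 4)
  rw [kalton_coord (idx b) b (idx_spec b).symm x]
  have h := recon (n := idx b) (y := (x b : ℕ → ZMod 4)) (by rw [idx_spec b]; exact (x b).2)
  rw [idx_spec b] at h
  exact h.symm

theorem kalton_open (U : Set (⨁ a : AS, AddSubgroup.zmultiples a.1))
    (hU : @IsOpen _ (sumTop AS) U) :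
    ∃ V : Set (ℕ → ZMod 4), IsOpen V ∧
      (kalton AS) '' U = V ∩ (AddSubgroup.closure AS : Set (ℕ → ZMod 4)) := by
  rw [sumTop, isOpen_induced_iff] at hU
  obtain ⟨O, hO, hUO⟩ := hU
  refine ⟨PP ⁻¹' O, hO.preimage PP_cont, ?_⟩
  ext g
  constructor
  · rintro ⟨x, hx, rfl⟩
    refine ⟨?_, by rw [← kalton_range]; exact Set.mem_range_self x⟩
    show PP (kalton AS x) ∈ O
    rw [PP_kalton]
    rw [← hUO] at hx
    exact hx
  · rintro ⟨hgV, hgc⟩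
    rw [← kalton_range] at hgc
    obtain ⟨x, rfl⟩ := hgc
    refine ⟨x, ?_, rfl⟩
    rw [← hUO]
    show (fun a => x a) ∈ O
    rw [← PP_kalton]
    exact hgV


theorem not_topIndep : ¬ TopIndep AS := by
  rintro ⟨-, hind⟩
  have hWopen : IsOpen {g : ℕ → ZMod 4 | g 0 = 0} :=
    (continuous_apply 0).isOpen_preimage {0} (isOpen_discrete _)
  have hW : {g : ℕ → ZMod 4 | g 0 = 0} ∈ nhds (0 : ℕ → ZMod 4) :=
    hWopen.mem_nhds (by simp)
  obtain ⟨U, hU, hprop⟩ := hind _ hW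
  -- the sequence aa (2k) - aa (2k+1) tends to 0
  have ht : Filter.Tendsto (fun k => aa (2*k) - aa (2*k+1)) Filter.atTop
      (nhds (0 : ℕ → ZMod 4)) := by
    rw [tendsto_pi_nhds]
    intro i
    have hev : ∀ᶠ k in Filter.atTop, (aa (2*k) - aa (2*k+1)) i = (0 : ZMod 4) := by
      rw [Filter.eventually_atTop]
      refine ⟨i + 1, fun k hk => ?_⟩
      rcases Nat.eq_zero_or_pos i with rfl | hi
      · simp [aa]
      · obtain ⟨j, rfl⟩ := Nat.exists_eq_add_of_lt hi
        have h1 : ¬(j + 1 = 0 ∨ j + 1 = 2*k + 1) := by omega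
        have h2 : ¬(j + 1 = 0 ∨ j + 1 = 2*k + 1 + 1) := by omega
        simp only [Pi.sub_apply, aa, zero_add]
        rw [if_neg h1, if_neg h2, sub_zero]
    refine Filter.Tendsto.congr' ?_ tendsto_const_nhds
    exact hev.mono fun k hk => by rw [Pi.zero_apply, ← hk]
  obtain ⟨k, hk⟩ := (ht.eventually_mem hU).exists
  classical
  have hne : aa (2*k) ≠ aa (2*k+1) := fun h => by have := aa_inj h; omega
  set z : (ℕ → ZMod 4) → ℤ := fun g => if g = aa (2*k) then 1 else -1 with hz
  have hzsum : ∑ a ∈ ({aa (2*k), aa (2*k+1)} : Finset (ℕ → ZMod 4)), z a • a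
      = aa (2*k) - aa (2*k+1) := by
    rw [Finset.sum_pair hne, hz]
    simp only [if_pos rfl, if_neg hne.symm, one_zsmul, neg_smul, sub_eq_add_neg, if_true,
      eq_self_iff_true]
  have hmem : (↑({aa (2*k), aa (2*k+1)} : Finset (ℕ → ZMod 4)) : Set (ℕ → ZMod 4)) ⊆ AS := by
    intro g hg
    simp only [Finset.coe_insert, Finset.coe_singleton, Set.mem_insert_iff,
      Set.mem_singleton_iff] at hg
    rcases hg with rfl | rfl
    · exact ⟨2*k, rfl⟩
    · exact ⟨2*k+1, rfl⟩
  have := hprop _ hmem z (by rw [hzsum]; exact hk) (aa (2*k))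
    (Finset.mem_insert_self _ _)
  simp only [hz, if_pos rfl, one_zsmul, Set.mem_setOf_eq, if_true, eq_self_iff_true] at this
  have h0 : aa (2*k) 0 = 1 := by simp [aa]
  rw [h0] at this
  exact absurd this (by decide)



/-- **Example**: there is a precompact Hausdorff abelian topological group `G` and a set `A` of
nonzero elements of `G` such that the Kalton map `κ_A : S_A → ⟨A⟩` is a group isomorphism onto
`⟨A⟩` and an open map onto `⟨A⟩` (with the subspace topology), but `A` is not topologically
independent. -/
theorem exists_open_iso_kalton_not_topIndep :
    ∃ (G : Type) (_ : AddCommGroup G) (_ : UniformSpace G),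
      IsUniformAddGroup G ∧ T2Space G ∧ TotallyBounded (Set.univ : Set G) ∧
      ∃ A : Set G, (∀ a ∈ A, a ≠ 0) ∧
        Function.Injective (kalton A) ∧
        Set.range (kalton A) = (AddSubgroup.closure A : Set G) ∧
        (∀ U : Set (⨁ a : A, AddSubgroup.zmultiples a.1), @IsOpen _ (sumTop A) U →
          ∃ V : Set G, IsOpen V ∧ (kalton A) '' U = V ∩ (AddSubgroup.closure A : Set G)) ∧
        ¬ TopIndep A := by
  refine ⟨ℕ → ZMod 4, inferInstance, inferInstance, inferInstance, (by haveI : @DiscreteTopology (ZMod 4) U4.toTopologicalSpace := discreteTopology_bot _; exact @Pi.t2Space _ _ _ fun _ => @DiscreteTopology.toT2Space _ U4.toTopologicalSpace this),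
    isCompact_univ.totallyBounded, AS, ?_, kalton_inj, kalton_range, kalton_open, not_topIndep⟩
  rintro g ⟨n, rfl⟩ h
  exact aa_ne_zero n h


end Setup
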